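/- arXiv:1105.0844 — 2 statements merged into one kernel-verified Lean document; each statement's English description precedes it below -/
import Mathlib

section
/- (Intrinsic Hessian of the end-point map on its kernel.) For all γ, φ ∈ H¹(0) with d_γE(φ) = 0: d²_γE(φ,φ) = ( 0, ∫₀¹ ⁅φ,φ̇⁆ dt, ∫₀¹ ⁅φ,⁅φ,γ̇⁆⁆ dt + ∫₀¹ ⁅γ − ½γ(1), ⁅φ,φ̇⁆⁆ dt ) ∈ V¹ ⊕ V² ⊕ V³. -/
open MeasureTheory Set intervalIntegral

noncomputable section

variable {𝕓 : Type*} [NormedAddCommGroup 𝕓] [InnerProductSpace ℝ 𝕓] [FiniteDimensional ℝ 𝕓]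

/-- The space `H¹(0)` of curves `γ : [0,1] → V¹` with `γ(t) = ∫₀ᵗ γ̇(s) ds` for a
square-integrable `γ̇` with values in `V¹`.  A curve is identified with its derivative
`γ̇ : ℝ → 𝕓`; the curve itself is recovered by `curve`. -/
def H1zero (V1 : Submodule ℝ 𝕓) : Submodule ℝ (ℝ → 𝕓) where
  carrier := {g | (∀ t, g t ∈ V1) ∧ MemLp g 2 (volume.restrict (Icc (0:ℝ) 1))}
  add_mem' := fun hg hh => ⟨fun t => V1.add_mem (hg.1 t) (hh.1 t), hg.2.add hh.2⟩
  zero_mem' := ⟨fun _ => V1.zero_mem, MemLp.zero⟩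
  smul_mem' := fun c _ hg => ⟨fun t => V1.smul_mem c (hg.1 t), hg.2.const_smul c⟩

/-- The curve associated to a derivative: `γ(t) = ∫₀ᵗ γ̇(s) ds`. -/
def curve (g : ℝ → 𝕓) (t : ℝ) : 𝕓 := ∫ s in (0:ℝ)..t, g s

variable (br : 𝕓 →ₗ[ℝ] 𝕓 →ₗ[ℝ] 𝕓)

/-- First layer of the end-point map: `F¹(γ) = γ(1)`. -/
def F1 (g : ℝ → 𝕓) : 𝕓 := curve g 1

/-- The second layer `γ²(t) = ½∫₀ᵗ ⁅γ,γ̇⁆`. -/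
def curve2 (g : ℝ → 𝕓) (t : ℝ) : 𝕓 := (2:ℝ)⁻¹ • ∫ s in (0:ℝ)..t, br (curve g s) (g s)

/-- Second layer of the end-point map: `F²(γ) = ½∫₀¹ ⁅γ,γ̇⁆`. -/
def F2 (g : ℝ → 𝕓) : 𝕓 := curve2 br g 1

/-- Third layer of the end-point map:
`F³(γ) = ∫₀¹ (½(⁅γ,γ̇²⁆ + ⁅γ²,γ̇⁆) − (1/6)⁅γ,⁅γ,γ̇⁆⁆)`, with `γ̇² = ½⁅γ,γ̇⁆`. -/
def F3 (g : ℝ → 𝕓) : 𝕓 :=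
  ∫ t in (0:ℝ)..1,
    ((2:ℝ)⁻¹ • (br (curve g t) ((2:ℝ)⁻¹ • br (curve g t) (g t)) + br (curve2 br g t) (g t))
      - (6:ℝ)⁻¹ • br (curve g t) (br (curve g t) (g t)))

/-- The end-point map `E(γ) = (F¹(γ), F²(γ), F³(γ)) ∈ V¹ ⊕ V² ⊕ V³`. -/
def Emap (g : ℝ → 𝕓) : 𝕓 × 𝕓 × 𝕓 := (F1 g, F2 br g, F3 br g)

/-- `d_γF¹(φ)`. -/
def dF1 (γ φ : ℝ → 𝕓) : 𝕓 := deriv (fun ε : ℝ => F1 (γ + ε • φ)) 0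

/-- `d_γF²(φ)`. -/
def dF2 (γ φ : ℝ → 𝕓) : 𝕓 := deriv (fun ε : ℝ => F2 br (γ + ε • φ)) 0

/-- `d_γF³(φ)`. -/
def dF3 (γ φ : ℝ → 𝕓) : 𝕓 := deriv (fun ε : ℝ => F3 br (γ + ε • φ)) 0

/-- The differential of the end-point map, `d_γE(φ) = (d/dε)|₀ E(γ + εφ)`. -/
def dE (γ φ : ℝ → 𝕓) : 𝕓 × 𝕓 × 𝕓 := deriv (fun ε : ℝ => Emap br (γ + ε • φ)) 0

/-- The Hessian of the end-point map, `d²_γE(φ,φ) = (d²/dε²)|₀ E(γ + εφ)`. -/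
def d2E (γ φ : ℝ → 𝕓) : 𝕓 × 𝕓 × 𝕓 := iteratedDeriv 2 (fun ε : ℝ => Emap br (γ + ε • φ)) 0

/-- The energy `L(γ) = ½∫₀¹ |γ̇|²`. -/
def energy (g : ℝ → 𝕓) : ℝ := (2:ℝ)⁻¹ * ∫ t in (0:ℝ)..1, ‖g t‖^2

/-- `γ` is a local minimizer of the energy subject to the end-point constraint. -/
def IsLocMin (V1 : Submodule ℝ 𝕓) (γ : ℝ → 𝕓) : Prop :=
  γ ∈ H1zero V1 ∧ ∃ ε > 0, ∀ h ∈ H1zero V1, Emap br h = Emap br γ →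
    (∫ t in (0:ℝ)..1, ‖γ t - h t‖^2) < ε → energy γ ≤ energy h

/-- `γ` is singular: the image of `d_γE` spans a proper subspace of `𝔟 = V¹ ⊕ V² ⊕ V³`. -/
def IsSingular (V1 V2 V3 : Submodule ℝ 𝕓) (γ : ℝ → 𝕓) : Prop :=
  Submodule.span ℝ {x : 𝕓 × 𝕓 × 𝕓 | ∃ φ ∈ H1zero V1, dE br γ φ = x}
    < V1.prod (V2.prod V3)

/-- A triple of linear functionals acting componentwise on `V¹ ⊕ V² ⊕ V³`. -/
def pairL (l1 l2 l3 : 𝕓 →ₗ[ℝ] ℝ) (x : 𝕓 × 𝕓 × 𝕓) : ℝ := l1 x.1 + l2 x.2.1 + l3 x.2.2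

/-- `𝔟` is a Carnot algebra of step at most 3 with layers `V¹, V², V³` and Lie bracket `br`:
the layers form an internal direct sum, `V² = span ⁅V¹,V¹⁆`, `V³ = span ⁅V¹,V²⁆`,
`⁅V¹,V³⁆ = 0`, and `br` is alternating and satisfies the Jacobi identity. -/
def CarnotStep3 (V1 V2 V3 : Submodule ℝ 𝕓) : Prop :=
  DirectSum.IsInternal ![V1, V2, V3] ∧
  V2 = Submodule.span ℝ {x | ∃ a ∈ V1, ∃ b ∈ V1, x = br a b} ∧
  V3 = Submodule.span ℝ {x | ∃ a ∈ V1, ∃ ξ ∈ V2, x = br a ξ} ∧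
  (∀ a ∈ V1, ∀ ζ ∈ V3, br a ζ = 0) ∧
  (∀ x, br x x = 0) ∧
  (∀ x y z, br x (br y z) + br y (br z x) + br z (br x y) = 0)

/-- The quadratic form `Q` restricted to `K` has finite Morse index: there is a uniform
bound on the dimension of subspaces contained in `K` on which `Q` is negative definite. -/
def HasFiniteMorseIndexOn (Q : (ℝ → 𝕓) → ℝ) (K : Set (ℝ → 𝕓)) : Prop :=
  ∃ N : ℕ, ∀ P : Submodule ℝ (ℝ → 𝕓), (P : Set (ℝ → 𝕓)) ⊆ K →
    (∀ φ ∈ P, φ ≠ 0 → Q φ < 0) → Module.rank ℝ P ≤ N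

/-- `γ` is a normal geodesic: there are multipliers `λ², λ³` such that
`∫₀¹ (⟨γ̇,φ̇⟩ + λ²⁅φ,γ̇⁆ + λ³⁅γ − ½γ(1), ⁅φ,γ̇⁆⁆) dt = 0` for all `φ ∈ H¹(0)` with `φ(1) = 0`. -/
def IsNormal (V1 : Submodule ℝ 𝕓) (γ : ℝ → 𝕓) : Prop :=
  ∃ l2 l3 : 𝕓 →ₗ[ℝ] ℝ,
    ∀ φ ∈ H1zero V1, curve φ 1 = 0 →
      (∫ t in (0:ℝ)..1,
        ((inner ℝ (γ t) (φ t) : ℝ) + l2 (br (curve φ t) (γ t))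
          + l3 (br (curve γ t - (2:ℝ)⁻¹ • curve γ 1) (br (curve φ t) (γ t))))) = 0


/-! ### Auxiliary material for `statement15` -/

section St15Aux

set_option linter.unusedSectionVars false

variable {E : Type*} [NormedAddCommGroup E] [NormedSpace ℝ E]

theorem st15_hasDerivAt_poly3 (v0 v1 v2 v3 : E) (x : ℝ) :
    HasDerivAt (fun ε : ℝ => v0 + ε • v1 + ε ^ 2 • v2 + ε ^ 3 • v3)
      (v1 + (2 * x) • v2 + (3 * x ^ 2) • v3) x := by
  have h0 : HasDerivAt (fun _ : ℝ => v0) (0 : E) x := hasDerivAt_const _ _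
  have h1 : HasDerivAt (fun ε : ℝ => ε • v1) ((1 : ℝ) • v1) x := (hasDerivAt_id x).smul_const v1
  have h2 : HasDerivAt (fun ε : ℝ => ε ^ 2 • v2) (((2 : ℕ) * x ^ 1 : ℝ) • v2) x :=
    (hasDerivAt_pow 2 x).smul_const v2
  have h3 : HasDerivAt (fun ε : ℝ => ε ^ 3 • v3) (((3 : ℕ) * x ^ 2 : ℝ) • v3) x :=
    (hasDerivAt_pow 3 x).smul_const v3
  have := ((h0.add h1).add h2).add h3
  simpa [pow_one, Pi.add_def] using this

theorem st15_deriv_poly3 (v0 v1 v2 v3 : E) :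
    deriv (fun ε : ℝ => v0 + ε • v1 + ε ^ 2 • v2 + ε ^ 3 • v3) 0 = v1 := by
  simpa using (st15_hasDerivAt_poly3 v0 v1 v2 v3 0).deriv

theorem st15_iteratedDeriv2_poly3 (v0 v1 v2 v3 : E) :
    iteratedDeriv 2 (fun ε : ℝ => v0 + ε • v1 + ε ^ 2 • v2 + ε ^ 3 • v3) 0 = (2 : ℝ) • v2 := by
  have hd : deriv (fun ε : ℝ => v0 + ε • v1 + ε ^ 2 • v2 + ε ^ 3 • v3)
      = fun x : ℝ => v1 + x • ((2 : ℝ) • v2) + x ^ 2 • ((3 : ℝ) • v3) + x ^ 3 • (0 : E) := by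
    funext x
    rw [(st15_hasDerivAt_poly3 v0 v1 v2 v3 x).deriv]
    module
  rw [iteratedDeriv_succ, iteratedDeriv_one, hd]
  exact st15_deriv_poly3 _ _ _ _

variable {F : Type*} [NormedAddCommGroup F] [NormedSpace ℝ F] [CompleteSpace F]

theorem st15_ibp (B : F →L[ℝ] F →L[ℝ] F) {f g : ℝ → F} {x : ℝ} (hx : 0 ≤ x)
    (hf : IntegrableOn f (Ioc 0 x)) (hg : IntegrableOn g (Ioc 0 x)) :
    (∫ t in (0:ℝ)..x, B (f t) (∫ s in (0:ℝ)..t, g s))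
      + (∫ t in (0:ℝ)..x, B (∫ s in (0:ℝ)..t, f s) (g t))
      = B (∫ t in (0:ℝ)..x, f t) (∫ t in (0:ℝ)..x, g t) := by
  set ν := volume.restrict (Ioc (0:ℝ) x) with hν
  have hfi : Integrable f ν := hf
  have hgi : Integrable g ν := hg
  set H : ℝ × ℝ → F := fun z => B (f z.1) (g z.2) with hHdef
  have hmH : AEStronglyMeasurable H (ν.prod ν) :=
    B.aestronglyMeasurable_comp₂ hfi.1.comp_fst hgi.1.comp_snd
  have hH : Integrable H (ν.prod ν) := by
    have hbound : Integrable (fun z : ℝ × ℝ => (‖B‖ * ‖f z.1‖) * ‖g z.2‖) (ν.prod ν) :=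
      Integrable.mul_prod (hfi.norm.const_mul ‖B‖) hgi.norm
    refine hbound.mono' hmH (Filter.Eventually.of_forall fun z => ?_)
    exact B.le_opNorm₂ _ _
  set A₁ : Set (ℝ × ℝ) := {z | 0 < z.2} ∩ {z | z.2 ≤ z.1} with hA₁def
  set A₂ : Set (ℝ × ℝ) := {z | 0 < z.1} ∩ {z | z.1 < z.2} with hA₂def
  have hA₁ : MeasurableSet A₁ :=
    (measurableSet_lt measurable_const measurable_snd).inter
      (measurableSet_le measurable_snd measurable_fst)
  have hA₂ : MeasurableSet A₂ :=
    (measurableSet_lt measurable_const measurable_fst).inter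
      (measurableSet_lt measurable_fst measurable_snd)
  have he₁ : Integrable (A₁.indicator H) (ν.prod ν) := hH.indicator hA₁
  have he₂ : Integrable (A₂.indicator H) (ν.prod ν) := hH.indicator hA₂
  have key1 : (∫ t in (0:ℝ)..x, B (f t) (∫ s in (0:ℝ)..t, g s))
      = ∫ z, A₁.indicator H z ∂(ν.prod ν) := by
    have hii := MeasureTheory.integral_integral (f := fun t s => A₁.indicator H (t, s))
      (by exact he₁)
    rw [← hii, intervalIntegral.integral_of_le hx]
    refine integral_congr_ae ?_
    filter_upwards [ae_restrict_mem measurableSet_Ioc] with t ht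
    have hind : (fun s => A₁.indicator H (t, s)) = (Ioc 0 t).indicator (fun s => B (f t) (g s)) := by
      funext s
      have hmem : ((t, s) ∈ A₁) ↔ s ∈ Ioc 0 t := by
        simp [hA₁def, Set.mem_Ioc, and_comm]
      rw [Set.indicator_apply, Set.indicator_apply, if_congr hmem rfl rfl]
    rw [hind, MeasureTheory.integral_indicator measurableSet_Ioc, hν,
      Measure.restrict_restrict_of_subset (Ioc_subset_Ioc_right ht.2),
      ContinuousLinearMap.integral_comp_comm (B (f t))
        (hg.mono_set (Ioc_subset_Ioc_right ht.2)),
      intervalIntegral.integral_of_le ht.1.le]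
  have key2 : (∫ t in (0:ℝ)..x, B (∫ s in (0:ℝ)..t, f s) (g t))
      = ∫ z, A₂.indicator H z ∂(ν.prod ν) := by
    rw [← MeasureTheory.integral_prod_swap (A₂.indicator H)]
    have hii := MeasureTheory.integral_integral
      (f := fun t s => A₂.indicator H (Prod.swap (t, s))) (by exact he₂.swap)
    rw [show ∫ z : ℝ × ℝ, A₂.indicator H z.swap ∂(ν.prod ν)
        = ∫ z : ℝ × ℝ, A₂.indicator H (Prod.swap (z.1, z.2)) ∂(ν.prod ν) from rfl, ← hii,
      intervalIntegral.integral_of_le hx]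
    refine integral_congr_ae ?_
    filter_upwards [ae_restrict_mem measurableSet_Ioc] with t ht
    have hind : (fun s => A₂.indicator H (Prod.swap (t, s)))
        = (Ioo 0 t).indicator (fun s => B (f s) (g t)) := by
      funext s
      have hmem : ((s, t) ∈ A₂) ↔ s ∈ Ioo 0 t := by
        simp [hA₂def, Set.mem_Ioo]
      rw [show Prod.swap (t, s) = (s, t) from rfl, Set.indicator_apply, Set.indicator_apply,
        if_congr hmem rfl rfl]
    show B (∫ s in (0:ℝ)..t, f s) (g t) = ∫ s, A₂.indicator H (Prod.swap (t, s)) ∂ν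
    rw [hind, MeasureTheory.integral_indicator measurableSet_Ioo, hν,
      Measure.restrict_restrict_of_subset (Ioo_subset_Ioc_self.trans (Ioc_subset_Ioc_right ht.2)),
      ← MeasureTheory.integral_Ioc_eq_integral_Ioo,
      show (fun s => B (f s) (g t)) = fun s => B.flip (g t) (f s) from rfl,
      ContinuousLinearMap.integral_comp_comm (B.flip (g t))
        (hf.mono_set (Ioc_subset_Ioc_right ht.2)),
      intervalIntegral.integral_of_le ht.1.le]
    rfl
  have key3 : ∫ z, H z ∂(ν.prod ν)
      = B (∫ t in (0:ℝ)..x, f t) (∫ t in (0:ℝ)..x, g t) := by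
    have hii := MeasureTheory.integral_integral (f := fun t s => B (f t) (g s)) (by exact hH)
    rw [show ∫ z : ℝ × ℝ, H z ∂(ν.prod ν)
        = ∫ z : ℝ × ℝ, B (f z.1) (g z.2) ∂(ν.prod ν) from rfl, ← hii,
      intervalIntegral.integral_of_le hx, intervalIntegral.integral_of_le hx]
    calc (∫ t, ∫ s, B (f t) (g s) ∂ν ∂ν) = ∫ t, B (f t) (∫ s, g s ∂ν) ∂ν := by
          refine integral_congr_ae (Filter.Eventually.of_forall fun t => ?_)
          exact ContinuousLinearMap.integral_comp_comm (B (f t)) hgi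
      _ = ∫ t, B.flip (∫ s, g s ∂ν) (f t) ∂ν := rfl
      _ = B.flip (∫ s, g s ∂ν) (∫ t, f t ∂ν) :=
          ContinuousLinearMap.integral_comp_comm _ hfi
      _ = B (∫ t, f t ∂ν) (∫ s, g s ∂ν) := rfl
  have key4 : (fun z => A₁.indicator H z + A₂.indicator H z) =ᵐ[ν.prod ν] H := by
    have hbox : ∀ᵐ z ∂(ν.prod ν), z ∈ Ioc (0:ℝ) x ×ˢ Ioc (0:ℝ) x := by
      rw [hν, Measure.prod_restrict]
      exact ae_restrict_mem (measurableSet_Ioc.prod measurableSet_Ioc)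
    filter_upwards [hbox] with z hz
    obtain ⟨⟨h1, _⟩, ⟨h2, _⟩⟩ := hz
    rcases le_or_gt z.2 z.1 with h | h
    · have hz1 : z ∈ A₁ := ⟨h2, h⟩
      have hz2 : z ∉ A₂ := fun hc => absurd hc.2 (not_lt.mpr h)
      simp [Set.indicator_of_mem hz1, Set.indicator_of_notMem hz2]
    · have hz1 : z ∉ A₁ := fun hc => absurd hc.2 (not_le.mpr h)
      have hz2 : z ∈ A₂ := ⟨h1, h⟩
      simp [Set.indicator_of_mem hz2, Set.indicator_of_notMem hz1]
  rw [key1, key2, ← integral_add he₁ he₂, integral_congr_ae key4, key3]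

theorem st15_integrableOn_bil (B : F →L[ℝ] F →L[ℝ] F) {u v : ℝ → F}
    (hu : ContinuousOn u (Icc 0 1)) (hv : IntegrableOn v (Icc (0:ℝ) 1) volume) :
    IntegrableOn (fun t => B (u t) (v t)) (Icc (0:ℝ) 1) volume := by
  obtain ⟨C, hC⟩ := (isCompact_Icc (a := (0:ℝ)) (b := 1)).exists_bound_of_continuousOn hu
  have hm : AEStronglyMeasurable (fun t => B (u t) (v t)) (volume.restrict (Icc (0:ℝ) 1)) :=
    B.aestronglyMeasurable_comp₂ (hu.aestronglyMeasurable measurableSet_Icc) hv.1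
  refine (hv.norm.const_mul (‖B‖ * C)).mono' hm ?_
  filter_upwards [ae_restrict_mem measurableSet_Icc] with t ht
  calc ‖B (u t) (v t)‖ ≤ ‖B‖ * ‖u t‖ * ‖v t‖ := B.le_opNorm₂ _ _
    _ ≤ ‖B‖ * C * ‖v t‖ := by
        have h1 := hC t ht
        gcongr

theorem st15_integrableOn_bil' (B : F →L[ℝ] F →L[ℝ] F) {u v : ℝ → F}
    (hu : IntegrableOn u (Icc (0:ℝ) 1) volume) (hv : ContinuousOn v (Icc 0 1)) :
    IntegrableOn (fun t => B (u t) (v t)) (Icc (0:ℝ) 1) volume := by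
  have := st15_integrableOn_bil B.flip hv hu
  simpa using this

theorem st15_contOn_bil (B : F →L[ℝ] F →L[ℝ] F) {u v : ℝ → F}
    (hu : ContinuousOn u (Icc 0 1)) (hv : ContinuousOn v (Icc (0:ℝ) 1)) :
    ContinuousOn (fun t => B (u t) (v t)) (Icc (0:ℝ) 1) :=
  (B.continuous.comp_continuousOn hu).clm_apply hv

theorem st15_contOn_primitive {v : ℝ → F} (hv : IntegrableOn v (Icc (0:ℝ) 1) volume) :
    ContinuousOn (fun t => ∫ s in (0:ℝ)..t, v s) (Icc (0:ℝ) 1) := by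
  have := intervalIntegral.continuousOn_primitive_interval
    (a := (0:ℝ)) (b := 1) (μ := volume) (f := v) (by rwa [uIcc_of_le zero_le_one])
  rwa [uIcc_of_le zero_le_one] at this

theorem st15_II {v : ℝ → F} (hv : IntegrableOn v (Icc (0:ℝ) 1) volume) {t : ℝ}
    (ht : t ∈ Icc (0:ℝ) 1) : IntervalIntegrable v volume 0 t := by
  refine (hv.mono_set ?_).intervalIntegrable
  rw [uIcc_of_le ht.1]
  exact Icc_subset_Icc le_rfl ht.2

theorem st15_II1 {v : ℝ → F} (hv : IntegrableOn v (Icc (0:ℝ) 1) volume) :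
    IntervalIntegrable v volume 0 1 :=
  st15_II hv (by constructor <;> norm_num)

end St15Aux

section St15Main

set_option linter.unusedSectionVars false

/-- The Lie bracket as a continuous bilinear map. -/
noncomputable def stB : 𝕓 →L[ℝ] 𝕓 →L[ℝ] 𝕓 :=
  LinearMap.toContinuousLinearMap
    { toFun := fun x => LinearMap.toContinuousLinearMap (br x)
      map_add' := fun x y => by ext z; simp
      map_smul' := fun c x => by ext z; simp }

@[simp] theorem stB_apply (x y : 𝕓) : stB br x y = br x y := rfl

variable (γ φ : ℝ → 𝕓)

def stw : ℝ → 𝕓 := fun t => stB br (curve γ t) (γ t)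
def stC : ℝ → 𝕓 := fun t => ∫ s in (0:ℝ)..t, stw br γ s
def stm : ℝ → 𝕓 := fun t => stB br (curve γ t) (φ t) + stB br (curve φ t) (γ t)
def stN : ℝ → 𝕓 := fun t => ∫ s in (0:ℝ)..t, stm br γ φ s
def stp : ℝ → 𝕓 := fun t => stB br (curve φ t) (φ t)
def stQ : ℝ → 𝕓 := fun t => ∫ s in (0:ℝ)..t, stp br φ s
def stS1 : ℝ → 𝕓 := fun t => stB br (curve φ t) (stB br (curve φ t) (γ t))
def stS2 : ℝ → 𝕓 := fun t => stB br (curve φ t) (stB br (curve γ t) (φ t))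
def stS3 : ℝ → 𝕓 := fun t => stB br (curve γ t) (stB br (curve φ t) (φ t))
def stJ : ℝ → 𝕓 := fun t => stB br (φ t) (stB br (curve γ t) (curve φ t))
def stv : ℝ → 𝕓 := fun t => stB br (γ t) (curve φ t) + stB br (curve γ t) (φ t)
def stT0 : ℝ → 𝕓 := fun t =>
  (12:ℝ)⁻¹ • stB br (curve γ t) (stw br γ t) + (4:ℝ)⁻¹ • stB br (stC br γ t) (γ t)
def stT1 : ℝ → 𝕓 := fun t =>
  (12:ℝ)⁻¹ • (stB br (curve γ t) (stm br γ φ t) + stB br (curve φ t) (stw br γ t))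
    + (4:ℝ)⁻¹ • (stB br (stC br γ t) (φ t) + stB br (stN br γ φ t) (γ t))
def stT2 : ℝ → 𝕓 := fun t =>
  (12:ℝ)⁻¹ • (stS1 br γ φ t + stS2 br γ φ t + stS3 br γ φ t)
    + (4:ℝ)⁻¹ • (stB br (stN br γ φ t) (φ t) + stB br (stQ br φ t) (γ t))
def stT3 : ℝ → 𝕓 := fun t =>
  (12:ℝ)⁻¹ • stB br (curve φ t) (stp br φ t) + (4:ℝ)⁻¹ • stB br (stQ br φ t) (φ t)

variable {γ φ}

theorem st15_curve_add (hγI : IntegrableOn γ (Icc (0:ℝ) 1) volume)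
    (hφI : IntegrableOn φ (Icc (0:ℝ) 1) volume) (ε : ℝ) {t : ℝ} (ht : t ∈ Icc (0:ℝ) 1) :
    curve (γ + ε • φ) t = curve γ t + ε • curve φ t := by
  have h1 := st15_II hγI ht
  have h2 := st15_II hφI ht
  have h2' : IntervalIntegrable (fun s => ε • φ s) volume 0 t := h2.smul ε
  show (∫ s in (0:ℝ)..t, (γ + ε • φ) s) = _
  simp only [Pi.add_apply, Pi.smul_apply]
  rw [integral_add h1 h2', intervalIntegral.integral_smul]
  rfl

theorem st15_curve2_add (hγI : IntegrableOn γ (Icc (0:ℝ) 1) volume)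
    (hφI : IntegrableOn φ (Icc (0:ℝ) 1) volume) (ε : ℝ) {t : ℝ} (ht : t ∈ Icc (0:ℝ) 1) :
    curve2 br (γ + ε • φ) t
      = (2:ℝ)⁻¹ • stC br γ t + ε • ((2:ℝ)⁻¹ • stN br γ φ t)
        + ε ^ 2 • ((2:ℝ)⁻¹ • stQ br φ t) := by
  have hacont : ContinuousOn (curve γ) (Icc (0:ℝ) 1) := st15_contOn_primitive hγI
  have hbcont : ContinuousOn (curve φ) (Icc (0:ℝ) 1) := st15_contOn_primitive hφI
  have hwI : IntegrableOn (stw br γ) (Icc (0:ℝ) 1) volume :=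
    st15_integrableOn_bil (stB br) hacont hγI
  have hmI : IntegrableOn (stm br γ φ) (Icc (0:ℝ) 1) volume :=
    (st15_integrableOn_bil (stB br) hacont hφI).add (st15_integrableOn_bil (stB br) hbcont hγI)
  have hpI : IntegrableOn (stp br φ) (Icc (0:ℝ) 1) volume :=
    st15_integrableOn_bil (stB br) hbcont hφI
  have hcongr : EqOn (fun s => br (curve (γ + ε • φ) s) ((γ + ε • φ) s))
      (fun s => stw br γ s + ε • stm br γ φ s + ε ^ 2 • stp br φ s) (uIcc 0 t) := by
    intro s hs
    rw [uIcc_of_le ht.1] at hs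
    have hs1 : s ∈ Icc (0:ℝ) 1 := ⟨hs.1, hs.2.trans ht.2⟩
    simp only [Pi.add_apply, Pi.smul_apply, st15_curve_add hγI hφI ε hs1]
    simp only [stw, stm, stp, stB_apply, map_add, _root_.map_smul, LinearMap.add_apply,
      LinearMap.smul_apply]
    module
  have hm' : IntervalIntegrable (fun s => ε • stm br γ φ s) volume 0 t :=
    (st15_II hmI ht).smul ε
  have hp' : IntervalIntegrable (fun s => ε ^ 2 • stp br φ s) volume 0 t :=
    (st15_II hpI ht).smul (ε ^ 2)
  show (2:ℝ)⁻¹ • (∫ s in (0:ℝ)..t, br (curve (γ + ε • φ) s) ((γ + ε • φ) s)) = _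
  rw [intervalIntegral.integral_congr hcongr,
    integral_add ((st15_II hwI ht).add hm') hp',
    integral_add (st15_II hwI ht) hm', intervalIntegral.integral_smul, intervalIntegral.integral_smul]
  show (2:ℝ)⁻¹ • (stC br γ t + ε • stN br γ φ t + ε ^ 2 • stQ br φ t) = _
  module

theorem st15_F1_add (hγI : IntegrableOn γ (Icc (0:ℝ) 1) volume)
    (hφI : IntegrableOn φ (Icc (0:ℝ) 1) volume) (ε : ℝ) : F1 (γ + ε • φ) = curve γ 1 + ε • curve φ 1 :=
  st15_curve_add hγI hφI ε (right_mem_Icc.mpr zero_le_one)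

theorem st15_F2_add (hγI : IntegrableOn γ (Icc (0:ℝ) 1) volume)
    (hφI : IntegrableOn φ (Icc (0:ℝ) 1) volume) (ε : ℝ) :
    F2 br (γ + ε • φ)
      = (2:ℝ)⁻¹ • stC br γ 1 + ε • ((2:ℝ)⁻¹ • stN br γ φ 1)
        + ε ^ 2 • ((2:ℝ)⁻¹ • stQ br φ 1) :=
  st15_curve2_add br hγI hφI ε (right_mem_Icc.mpr zero_le_one)

theorem st15_F3_add (hγI : IntegrableOn γ (Icc (0:ℝ) 1) volume)
    (hφI : IntegrableOn φ (Icc (0:ℝ) 1) volume) (ε : ℝ) :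
    F3 br (γ + ε • φ)
      = (∫ t in (0:ℝ)..1, stT0 br γ t) + ε • (∫ t in (0:ℝ)..1, stT1 br γ φ t)
        + ε ^ 2 • (∫ t in (0:ℝ)..1, stT2 br γ φ t)
        + ε ^ 3 • (∫ t in (0:ℝ)..1, stT3 br φ t) := by
  have hacont : ContinuousOn (curve γ) (Icc (0:ℝ) 1) := st15_contOn_primitive hγI
  have hbcont : ContinuousOn (curve φ) (Icc (0:ℝ) 1) := st15_contOn_primitive hφI
  have hwI : IntegrableOn (stw br γ) (Icc (0:ℝ) 1) volume :=
    st15_integrableOn_bil (stB br) hacont hγI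
  have hmI : IntegrableOn (stm br γ φ) (Icc (0:ℝ) 1) volume :=
    (st15_integrableOn_bil (stB br) hacont hφI).add (st15_integrableOn_bil (stB br) hbcont hγI)
  have hpI : IntegrableOn (stp br φ) (Icc (0:ℝ) 1) volume :=
    st15_integrableOn_bil (stB br) hbcont hφI
  have hCcont : ContinuousOn (stC br γ) (Icc (0:ℝ) 1) := st15_contOn_primitive hwI
  have hNcont : ContinuousOn (stN br γ φ) (Icc (0:ℝ) 1) := st15_contOn_primitive hmI
  have hQcont : ContinuousOn (stQ br φ) (Icc (0:ℝ) 1) := st15_contOn_primitive hpI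
  have hT0I : IntegrableOn (stT0 br γ) (Icc (0:ℝ) 1) volume :=
    ((st15_integrableOn_bil (stB br) hacont hwI).smul ((12:ℝ)⁻¹)).add
      ((st15_integrableOn_bil (stB br) hCcont hγI).smul ((4:ℝ)⁻¹))
  have hT1I : IntegrableOn (stT1 br γ φ) (Icc (0:ℝ) 1) volume :=
    (((st15_integrableOn_bil (stB br) hacont hmI).add
        (st15_integrableOn_bil (stB br) hbcont hwI)).smul ((12:ℝ)⁻¹)).add
      (((st15_integrableOn_bil (stB br) hCcont hφI).add
        (st15_integrableOn_bil (stB br) hNcont hγI)).smul ((4:ℝ)⁻¹))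
  have hT2I : IntegrableOn (stT2 br γ φ) (Icc (0:ℝ) 1) volume :=
    ((((st15_integrableOn_bil (stB br) hbcont
          (st15_integrableOn_bil (stB br) hbcont hγI)).add
        (st15_integrableOn_bil (stB br) hbcont
          (st15_integrableOn_bil (stB br) hacont hφI))).add
        (st15_integrableOn_bil (stB br) hacont hpI)).smul ((12:ℝ)⁻¹)).add
      (((st15_integrableOn_bil (stB br) hNcont hφI).add
        (st15_integrableOn_bil (stB br) hQcont hγI)).smul ((4:ℝ)⁻¹))
  have hT3I : IntegrableOn (stT3 br φ) (Icc (0:ℝ) 1) volume :=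
    ((st15_integrableOn_bil (stB br) hbcont hpI).smul ((12:ℝ)⁻¹)).add
      ((st15_integrableOn_bil (stB br) hQcont hφI).smul ((4:ℝ)⁻¹))
  have hcongr : EqOn
      (fun t => ((2:ℝ)⁻¹ • (br (curve (γ + ε • φ) t)
          ((2:ℝ)⁻¹ • br (curve (γ + ε • φ) t) ((γ + ε • φ) t))
          + br (curve2 br (γ + ε • φ) t) ((γ + ε • φ) t))
        - (6:ℝ)⁻¹ • br (curve (γ + ε • φ) t)
            (br (curve (γ + ε • φ) t) ((γ + ε • φ) t))))
      (fun t => stT0 br γ t + ε • stT1 br γ φ t + ε ^ 2 • stT2 br γ φ t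
        + ε ^ 3 • stT3 br φ t) (uIcc 0 1) := by
    intro t htu
    rw [uIcc_of_le zero_le_one] at htu
    simp only [Pi.add_apply, Pi.smul_apply, st15_curve_add hγI hφI ε htu,
      st15_curve2_add br hγI hφI ε htu]
    simp only [stT0, stT1, stT2, stT3, stS1, stS2, stS3, stw, stm, stp, stB_apply,
      map_add, _root_.map_smul, LinearMap.add_apply, LinearMap.smul_apply]
    module
  show (∫ t in (0:ℝ)..1, ((2:ℝ)⁻¹ • (br (curve (γ + ε • φ) t)
      ((2:ℝ)⁻¹ • br (curve (γ + ε • φ) t) ((γ + ε • φ) t))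
      + br (curve2 br (γ + ε • φ) t) ((γ + ε • φ) t))
    - (6:ℝ)⁻¹ • br (curve (γ + ε • φ) t) (br (curve (γ + ε • φ) t) ((γ + ε • φ) t)))) = _
  have h1' : IntervalIntegrable (fun t => ε • stT1 br γ φ t) volume 0 1 :=
    (st15_II1 hT1I).smul ε
  have h2' : IntervalIntegrable (fun t => ε ^ 2 • stT2 br γ φ t) volume 0 1 :=
    (st15_II1 hT2I).smul (ε ^ 2)
  have h3' : IntervalIntegrable (fun t => ε ^ 3 • stT3 br φ t) volume 0 1 :=
    (st15_II1 hT3I).smul (ε ^ 3)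
  rw [intervalIntegral.integral_congr hcongr,
    integral_add (((st15_II1 hT0I).add h1').add h2') h3',
    integral_add ((st15_II1 hT0I).add h1') h2',
    integral_add (st15_II1 hT0I) h1',
    intervalIntegral.integral_smul, intervalIntegral.integral_smul,
    intervalIntegral.integral_smul]

end St15Main

/-- the intrinsic Hessian of the end-point map on its kernel. -/
theorem statement15 (V1 V2 V3 : Submodule ℝ 𝕓) (hC : CarnotStep3 br V1 V2 V3)
    (γ : ℝ → 𝕓) (hγ : γ ∈ H1zero V1) (φ : ℝ → 𝕓) (hφ : φ ∈ H1zero V1)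
    (h0 : dE br γ φ = 0) :
    d2E br γ φ = (0, ∫ t in (0:ℝ)..1, br (curve φ t) (φ t),
      (∫ t in (0:ℝ)..1, br (curve φ t) (br (curve φ t) (γ t)))
        + ∫ t in (0:ℝ)..1, br (curve γ t - (2:ℝ)⁻¹ • curve γ 1) (br (curve φ t) (φ t))) := by
  haveI : IsFiniteMeasure (volume.restrict (Icc (0:ℝ) 1)) := by
    constructor
    rw [Measure.restrict_apply_univ]
    simp [Real.volume_Icc]
  have hγI : IntegrableOn γ (Icc (0:ℝ) 1) volume := hγ.2.integrable one_le_two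
  have hφI : IntegrableOn φ (Icc (0:ℝ) 1) volume := hφ.2.integrable one_le_two
  -- continuity and integrability bookkeeping
  have hacont : ContinuousOn (curve γ) (Icc (0:ℝ) 1) := st15_contOn_primitive hγI
  have hbcont : ContinuousOn (curve φ) (Icc (0:ℝ) 1) := st15_contOn_primitive hφI
  have hwI : IntegrableOn (stw br γ) (Icc (0:ℝ) 1) volume :=
    st15_integrableOn_bil (stB br) hacont hγI
  have hmI : IntegrableOn (stm br γ φ) (Icc (0:ℝ) 1) volume :=
    (st15_integrableOn_bil (stB br) hacont hφI).add (st15_integrableOn_bil (stB br) hbcont hγI)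
  have hpI : IntegrableOn (stp br φ) (Icc (0:ℝ) 1) volume :=
    st15_integrableOn_bil (stB br) hbcont hφI
  have hS1I : IntegrableOn (stS1 br γ φ) (Icc (0:ℝ) 1) volume :=
    st15_integrableOn_bil (stB br) hbcont (st15_integrableOn_bil (stB br) hbcont hγI)
  have hS2I : IntegrableOn (stS2 br γ φ) (Icc (0:ℝ) 1) volume :=
    st15_integrableOn_bil (stB br) hbcont (st15_integrableOn_bil (stB br) hacont hφI)
  have hS3I : IntegrableOn (stS3 br γ φ) (Icc (0:ℝ) 1) volume :=
    st15_integrableOn_bil (stB br) hacont hpI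
  have hJI : IntegrableOn (stJ br γ φ) (Icc (0:ℝ) 1) volume :=
    st15_integrableOn_bil' (stB br) hφI (st15_contOn_bil (stB br) hacont hbcont)
  have hvI : IntegrableOn (stv br γ φ) (Icc (0:ℝ) 1) volume :=
    (st15_integrableOn_bil' (stB br) hγI hbcont).add (st15_integrableOn_bil (stB br) hacont hφI)
  have hNcont : ContinuousOn (stN br γ φ) (Icc (0:ℝ) 1) := st15_contOn_primitive hmI
  have hQcont : ContinuousOn (stQ br φ) (Icc (0:ℝ) 1) := st15_contOn_primitive hpI
  have hNφI : IntegrableOn (fun t => stB br (stN br γ φ t) (φ t)) (Icc (0:ℝ) 1) volume :=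
    st15_integrableOn_bil (stB br) hNcont hφI
  have hQγI : IntegrableOn (fun t => stB br (stQ br φ t) (γ t)) (Icc (0:ℝ) 1) volume :=
    st15_integrableOn_bil (stB br) hQcont hγI
  have ha1pI : IntegrableOn (fun t => stB br (curve γ 1) (stp br φ t)) (Icc (0:ℝ) 1) volume :=
    st15_integrableOn_bil (stB br) continuousOn_const hpI
  -- algebraic identities of the bracket
  have halt : ∀ x : 𝕓, br x x = 0 := hC.2.2.2.2.1
  have hjac : ∀ x y z : 𝕓, br x (br y z) + br y (br z x) + br z (br x y) = 0 := hC.2.2.2.2.2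
  have hanti : ∀ x y : 𝕓, br x y = - br y x := by
    intro x y
    have h := halt (x + y)
    simp only [map_add, LinearMap.add_apply, halt, zero_add, add_zero] at h
    exact eq_neg_of_add_eq_zero_right h
  -- the polynomial expansion of the endpoint map
  have hpoly : (fun ε : ℝ => Emap br (γ + ε • φ)) = fun ε : ℝ =>
      ((curve γ 1, (2:ℝ)⁻¹ • stC br γ 1, ∫ t in (0:ℝ)..1, stT0 br γ t) : 𝕓 × 𝕓 × 𝕓)
      + ε • (curve φ 1, (2:ℝ)⁻¹ • stN br γ φ 1, ∫ t in (0:ℝ)..1, stT1 br γ φ t)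
      + ε ^ 2 • ((0:𝕓), (2:ℝ)⁻¹ • stQ br φ 1, ∫ t in (0:ℝ)..1, stT2 br γ φ t)
      + ε ^ 3 • ((0:𝕓), (0:𝕓), ∫ t in (0:ℝ)..1, stT3 br φ t) := by
    funext ε
    show (F1 (γ + ε • φ), F2 br (γ + ε • φ), F3 br (γ + ε • φ)) = _
    rw [st15_F1_add hγI hφI ε, st15_F2_add br hγI hφI ε, st15_F3_add br hγI hφI ε]
    simp [Prod.ext_iff]
  -- the first-order conditions from `h0`
  have h0' : deriv (fun ε : ℝ => Emap br (γ + ε • φ)) 0 = 0 := h0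
  rw [hpoly, st15_deriv_poly3] at h0'
  have hb1 : curve φ 1 = 0 := by
    have := congrArg Prod.fst h0'
    simpa using this
  have hN1 : stN br γ φ 1 = 0 := by
    have h := congrArg (fun z : 𝕓 × 𝕓 × 𝕓 => z.2.1) h0'
    simp only [Prod.snd_zero, Prod.fst_zero] at h
    have h2 : (2:ℝ)⁻¹ • stN br γ φ 1 = 0 := h
    rcases smul_eq_zero.mp h2 with h3 | h3
    · norm_num at h3
    · exact h3
  -- abbreviations
  obtain ⟨I1, hI1⟩ : ∃ x : 𝕓, x = ∫ t in (0:ℝ)..1, stS1 br γ φ t := ⟨_, rfl⟩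
  obtain ⟨I2, hI2⟩ : ∃ x : 𝕓, x = ∫ t in (0:ℝ)..1, stS2 br γ φ t := ⟨_, rfl⟩
  obtain ⟨I3, hI3⟩ : ∃ x : 𝕓, x = ∫ t in (0:ℝ)..1, stS3 br γ φ t := ⟨_, rfl⟩
  obtain ⟨IJ, hIJdef⟩ : ∃ x : 𝕓, x = ∫ t in (0:ℝ)..1, stJ br γ φ t := ⟨_, rfl⟩
  obtain ⟨INφ, hINφdef⟩ : ∃ x : 𝕓, x = ∫ t in (0:ℝ)..1, stB br (stN br γ φ t) (φ t) := ⟨_, rfl⟩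
  obtain ⟨IQγ, hIQγdef⟩ : ∃ x : 𝕓, x = ∫ t in (0:ℝ)..1, stB br (stQ br φ t) (γ t) := ⟨_, rfl⟩
  -- first integration by parts: `∫ B(m, b) + ∫ B(N, φ) = B(N 1, b 1) = 0`
  have hINφ : INφ = I2 + I1 := by
    have ibp1 : (∫ t in (0:ℝ)..1, stB br (stm br γ φ t) (curve φ t))
        + (∫ t in (0:ℝ)..1, stB br (stN br γ φ t) (φ t))
        = stB br (stN br γ φ 1) (curve φ 1) :=
      st15_ibp (stB br) zero_le_one (hmI.mono_set Ioc_subset_Icc_self)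
        (hφI.mono_set Ioc_subset_Icc_self)
    rw [hN1] at ibp1
    simp only [map_zero, ContinuousLinearMap.zero_apply] at ibp1
    have hpt : (∫ t in (0:ℝ)..1, stB br (stm br γ φ t) (curve φ t))
        = ∫ t in (0:ℝ)..1, (-(stS2 br γ φ t + stS1 br γ φ t)) := by
      refine intervalIntegral.integral_congr fun t _ => ?_
      simp only [stm, stS1, stS2, stB_apply, map_add, LinearMap.add_apply,
        ContinuousLinearMap.add_apply]
      rw [hanti ((br (curve γ t)) (φ t)) (curve φ t), hanti ((br (curve φ t)) (γ t)) (curve φ t)]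
      abel
    rw [hpt, intervalIntegral.integral_neg,
      integral_add (st15_II1 hS2I) (st15_II1 hS1I), ← hI2, ← hI1, ← hINφdef,
      neg_add_eq_sub] at ibp1
    have := sub_eq_zero.mp ibp1
    rw [this]
  -- second integration by parts: `∫ B(p, a) + ∫ B(Q, γ) = B(Q 1, a 1)`
  have hIQγ : IQγ = stB br (stQ br φ 1) (curve γ 1) + I3 := by
    have ibp2 : (∫ t in (0:ℝ)..1, stB br (stp br φ t) (curve γ t))
        + (∫ t in (0:ℝ)..1, stB br (stQ br φ t) (γ t))
        = stB br (stQ br φ 1) (curve γ 1) :=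
      st15_ibp (stB br) zero_le_one (hpI.mono_set Ioc_subset_Icc_self)
        (hγI.mono_set Ioc_subset_Icc_self)
    have hpt : (∫ t in (0:ℝ)..1, stB br (stp br φ t) (curve γ t))
        = ∫ t in (0:ℝ)..1, (-(stS3 br γ φ t)) := by
      refine intervalIntegral.integral_congr fun t _ => ?_
      simp only [stp, stS3, stB_apply]
      exact hanti _ _
    rw [hpt, intervalIntegral.integral_neg, ← hI3, ← hIQγdef, neg_add_eq_sub] at ibp2
    exact sub_eq_iff_eq_add.mp ibp2
  -- the primitive of `stv` is `B(a, b)`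
  have heq4 : ∀ t ∈ Icc (0:ℝ) 1,
      (∫ s in (0:ℝ)..t, stv br γ φ s) = stB br (curve γ t) (curve φ t) := by
    intro t ht
    have hγt : IntegrableOn γ (Ioc 0 t) volume :=
      hγI.mono_set fun s hs => ⟨hs.1.le, hs.2.trans ht.2⟩
    have hφt : IntegrableOn φ (Ioc 0 t) volume :=
      hφI.mono_set fun s hs => ⟨hs.1.le, hs.2.trans ht.2⟩
    have h : (∫ s in (0:ℝ)..t, stB br (γ s) (curve φ s))
        + (∫ s in (0:ℝ)..t, stB br (curve γ s) (φ s))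
        = stB br (curve γ t) (curve φ t) := st15_ibp (stB br) ht.1 hγt hφt
    rw [← h, ← integral_add
      (st15_II (st15_integrableOn_bil' (stB br) hγI hbcont) ht)
      (st15_II (st15_integrableOn_bil (stB br) hacont hφI) ht)]
    exact intervalIntegral.integral_congr fun s _ => rfl
  -- third integration by parts: `∫ J + ∫ B(b, stv) = B(b 1, ∫ stv) = 0`
  have hIJ : IJ = I1 - I2 := by
    have ibp3 : (∫ t in (0:ℝ)..1, stB br (φ t) (∫ s in (0:ℝ)..t, stv br γ φ s))
        + (∫ t in (0:ℝ)..1, stB br (curve φ t) (stv br γ φ t))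
        = stB br (curve φ 1) (∫ t in (0:ℝ)..1, stv br γ φ t) :=
      st15_ibp (stB br) zero_le_one (hφI.mono_set Ioc_subset_Icc_self)
        (hvI.mono_set Ioc_subset_Icc_self)
    rw [hb1] at ibp3
    simp only [map_zero, ContinuousLinearMap.zero_apply] at ibp3
    have hfirst : (∫ t in (0:ℝ)..1, stB br (φ t) (∫ s in (0:ℝ)..t, stv br γ φ s))
        = ∫ t in (0:ℝ)..1, stJ br γ φ t := by
      refine intervalIntegral.integral_congr fun t htu => ?_
      rw [uIcc_of_le zero_le_one] at htu
      rw [heq4 t htu]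
      rfl
    have hsecond : (∫ t in (0:ℝ)..1, stB br (curve φ t) (stv br γ φ t))
        = ∫ t in (0:ℝ)..1, (stS2 br γ φ t - stS1 br γ φ t) := by
      refine intervalIntegral.integral_congr fun t _ => ?_
      simp only [stv, stS1, stS2, stB_apply, map_add]
      rw [hanti (γ t) (curve φ t)]
      simp only [map_neg]
      abel
    rw [hfirst, hsecond, integral_sub (st15_II1 hS2I) (st15_II1 hS1I),
      ← hI1, ← hI2, ← hIJdef] at ibp3
    have : IJ = -(I2 - I1) := eq_neg_of_add_eq_zero_left ibp3
    rw [this, neg_sub]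
  -- Jacobi identity: `I2 = I3 + IJ`
  have hjac2 : I2 = I3 + IJ := by
    have hpt : (∫ t in (0:ℝ)..1, stS2 br γ φ t)
        = ∫ t in (0:ℝ)..1, (stS3 br γ φ t + stJ br γ φ t) := by
      refine intervalIntegral.integral_congr fun t _ => ?_
      have h := hjac (curve φ t) (curve γ t) (φ t)
      rw [hanti (φ t) (curve φ t), hanti (curve φ t) (curve γ t)] at h
      simp only [map_neg] at h
      have h2 := h
      simp only [stS2, stS3, stJ, stB_apply]
      rw [add_assoc, ← neg_add, add_neg_eq_zero] at h2
      exact h2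
    rw [hI2, hpt, integral_add (st15_II1 hS3I) (st15_II1 hJI), ← hI3, ← hIJdef]
  have key : I2 + I2 = I1 + I3 := by
    have h := hjac2
    rw [hIJ] at h
    nth_rewrite 1 [h]
    abel
  -- compute `d2E`
  show iteratedDeriv 2 (fun ε : ℝ => Emap br (γ + ε • φ)) 0 = _
  rw [hpoly, st15_iteratedDeriv2_poly3]
  refine Prod.ext ?_ (Prod.ext ?_ ?_)
  · simp
  · show (2:ℝ) • ((2:ℝ)⁻¹ • stQ br φ 1) = ∫ t in (0:ℝ)..1, br (curve φ t) (φ t)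
    rw [smul_smul]
    norm_num
    rfl
  · show (2:ℝ) • (∫ t in (0:ℝ)..1, stT2 br γ φ t)
      = (∫ t in (0:ℝ)..1, br (curve φ t) (br (curve φ t) (γ t)))
        + ∫ t in (0:ℝ)..1, br (curve γ t - (2:ℝ)⁻¹ • curve γ 1) (br (curve φ t) (φ t))
    -- expand `∫ T2`
    have hAII : IntervalIntegrable (fun t => (12:ℝ)⁻¹ •
        (stS1 br γ φ t + stS2 br γ φ t + stS3 br γ φ t)) volume 0 1 :=
      ((((st15_II1 hS1I).add (st15_II1 hS2I)).add (st15_II1 hS3I)).smul ((12:ℝ)⁻¹))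
    have hBII : IntervalIntegrable (fun t => (4:ℝ)⁻¹ •
        (stB br (stN br γ φ t) (φ t) + stB br (stQ br φ t) (γ t))) volume 0 1 :=
      (((st15_II1 hNφI).add (st15_II1 hQγI)).smul ((4:ℝ)⁻¹))
    have hunf : (∫ t in (0:ℝ)..1, stT2 br γ φ t)
        = ∫ t in (0:ℝ)..1, ((12:ℝ)⁻¹ • (stS1 br γ φ t + stS2 br γ φ t + stS3 br γ φ t)
            + (4:ℝ)⁻¹ • (stB br (stN br γ φ t) (φ t) + stB br (stQ br φ t) (γ t))) := rfl
    rw [hunf, integral_add hAII hBII, intervalIntegral.integral_smul,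
      intervalIntegral.integral_smul,
      integral_add ((st15_II1 hS1I).add (st15_II1 hS2I)) (st15_II1 hS3I),
      integral_add (st15_II1 hS1I) (st15_II1 hS2I),
      integral_add (st15_II1 hNφI) (st15_II1 hQγI),
      ← hI1, ← hI2, ← hI3, ← hINφdef, ← hIQγdef]
    -- rewrite the target's second integral
    have ha1p' : IntervalIntegrable (fun t => (2:ℝ)⁻¹ • stB br (curve γ 1) (stp br φ t))
        volume 0 1 := (st15_II1 ha1pI).smul ((2:ℝ)⁻¹)
    have hRHS : (∫ t in (0:ℝ)..1, br (curve γ t - (2:ℝ)⁻¹ • curve γ 1) (br (curve φ t) (φ t)))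
        = I3 - (2:ℝ)⁻¹ • stB br (curve γ 1) (stQ br φ 1) := by
      have hpt : (∫ t in (0:ℝ)..1, br (curve γ t - (2:ℝ)⁻¹ • curve γ 1) (br (curve φ t) (φ t)))
          = ∫ t in (0:ℝ)..1,
              (stS3 br γ φ t - (2:ℝ)⁻¹ • stB br (curve γ 1) (stp br φ t)) := by
        refine intervalIntegral.integral_congr fun t _ => ?_
        simp only [stS3, stp, stB_apply, map_sub, _root_.map_smul, LinearMap.sub_apply,
          LinearMap.smul_apply]
      rw [hpt, integral_sub (st15_II1 hS3I) ha1p', intervalIntegral.integral_smul, ← hI3]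
      congr 2
      rw [intervalIntegral.integral_of_le zero_le_one,
        ContinuousLinearMap.integral_comp_comm _ (hpI.mono_set Ioc_subset_Icc_self),
        show stQ br φ 1 = ∫ s in (0:ℝ)..1, stp br φ s from rfl,
        intervalIntegral.integral_of_le zero_le_one]
    rw [show (∫ t in (0:ℝ)..1, br (curve φ t) (br (curve φ t) (γ t))) = I1 from hI1.symm, hRHS,
      hINφ, hIQγ]
    have hVW : stB br (stQ br φ 1) (curve γ 1) = -(stB br (curve γ 1) (stQ br φ 1)) := by
      simp only [stB_apply]
      exact hanti _ _
    rw [hVW]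
    linear_combination (norm := module) (3⁻¹ : ℝ) • key
end
end

section
/- In the free Carnot algebra of rank 2 and step 3, let γ(t) = t(c¹e₁ + c²e₂) with (c¹,c²) ≠ (0,0). Then d_γF³(φ) ∈ span{c¹e₄ + c²e₅} for every φ ∈ H¹(0); consequently the image of d_γE is a proper subspace of 𝔟, and γ is singular. -/
open MeasureTheory Set intervalIntegral

noncomputable section

variable {𝕓 : Type*} [NormedAddCommGroup 𝕓] [InnerProductSpace ℝ 𝕓] [FiniteDimensional ℝ 𝕓]

variable (br : 𝕓 →ₗ[ℝ] 𝕓 →ₗ[ℝ] 𝕓)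

section AuxLemmas

/-- The bracket as a continuous bilinear map. -/
def brC : 𝕓 →L[ℝ] 𝕓 →L[ℝ] 𝕓 :=
  LinearMap.toContinuousLinearMap
    (((LinearMap.toContinuousLinearMap :
        (𝕓 →ₗ[ℝ] 𝕓) ≃ₗ[ℝ] (𝕓 →L[ℝ] 𝕓)) : (𝕓 →ₗ[ℝ] 𝕓) →ₗ[ℝ] (𝕓 →L[ℝ] 𝕓)).comp br)

@[simp] lemma brC_apply (x y : 𝕓) : brC br x y = br x y := by
  simp [brC]

lemma integrableOn_br_right {f g : ℝ → 𝕓} (hf : ContinuousOn f (Icc (0:ℝ) 1))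
    (hg : IntegrableOn g (Icc (0:ℝ) 1)) :
    IntegrableOn (fun t => br (f t) (g t)) (Icc (0:ℝ) 1) := by
  obtain ⟨M, hM⟩ := isCompact_Icc.exists_bound_of_continuousOn hf
  have hmeas : AEStronglyMeasurable (fun t => br (f t) (g t))
      (volume.restrict (Icc (0:ℝ) 1)) := by
    have h1 : AEStronglyMeasurable f (volume.restrict (Icc (0:ℝ) 1)) :=
      hf.aestronglyMeasurable measurableSet_Icc
    have h2 : AEStronglyMeasurable g (volume.restrict (Icc (0:ℝ) 1)) :=
      hg.aestronglyMeasurable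
    have hcont : Continuous fun p : 𝕓 × 𝕓 => brC br p.1 p.2 := (brC br).continuous₂
    have := hcont.comp_aestronglyMeasurable (h1.prodMk h2)
    simpa using this
  refine Integrable.mono' ((hg.norm.const_mul (‖brC br‖ * max M 0))) hmeas ?_
  filter_upwards [ae_restrict_mem measurableSet_Icc] with t ht
  have h1 : ‖br (f t) (g t)‖ = ‖brC br (f t) (g t)‖ := by simp
  rw [h1]
  calc ‖brC br (f t) (g t)‖ ≤ ‖brC br‖ * ‖f t‖ * ‖g t‖ := (brC br).le_opNorm₂ _ _
    _ ≤ ‖brC br‖ * max M 0 * ‖g t‖ := by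
        gcongr
        exact le_max_of_le_left (hM t ht)

lemma continuousOn_br {f g : ℝ → 𝕓} (hf : ContinuousOn f (Icc (0:ℝ) 1))
    (hg : ContinuousOn g (Icc (0:ℝ) 1)) :
    ContinuousOn (fun t => br (f t) (g t)) (Icc (0:ℝ) 1) := by
  have hcont : Continuous fun p : 𝕓 × 𝕓 => brC br p.1 p.2 := (brC br).continuous₂
  have := hcont.comp_continuousOn (hf.prodMk hg)
  simp only [brC_apply] at this
  exact this

/-- Integral of a submodule-valued function lies in the submodule. -/
lemma integral_mem_submodule (W : Submodule ℝ 𝕓) {f : ℝ → 𝕓} {a b : ℝ}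
    (h : ∀ t, f t ∈ W) : (∫ t in a..b, f t) ∈ W := by
  by_cases hf : IntervalIntegrable f volume a b
  · have key : ∀ l : Module.Dual ℝ 𝕓, (∀ w ∈ W, l w = 0) → l (∫ t in a..b, f t) = 0 := by
      intro l hl
      have hc : (∫ t in a..b, (LinearMap.toContinuousLinearMap l) (f t))
          = (LinearMap.toContinuousLinearMap l) (∫ t in a..b, f t) :=
        (LinearMap.toContinuousLinearMap l).intervalIntegral_comp_comm hf
      have h0 : (fun t => (LinearMap.toContinuousLinearMap l) (f t)) = fun _ => (0:ℝ) := by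
        funext t
        simpa using hl (f t) (h t)
      have h2 : l (∫ t in a..b, f t)
          = (LinearMap.toContinuousLinearMap l) (∫ t in a..b, f t) := by simp
      rw [h2, ← hc, h0]
      simp
    have hq : ∀ g : Module.Dual ℝ (𝕓 ⧸ W), g (W.mkQ (∫ t in a..b, f t)) = 0 := by
      intro g
      refine key (g ∘ₗ W.mkQ) ?_
      intro w hw
      have : W.mkQ w = 0 := (Submodule.Quotient.mk_eq_zero W).2 hw
      simp [this]
    have := (Module.forall_dual_apply_eq_zero_iff ℝ (W.mkQ (∫ t in a..b, f t))).1 hq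
    simpa [Submodule.Quotient.mk_eq_zero] using this
  · rw [intervalIntegral.integral_undef hf]
    exact W.zero_mem

end AuxLemmas
set_option linter.unusedSectionVars false

section Expansion

variable (X : 𝕓) (φ : ℝ → 𝕓)

def wfun (t : ℝ) : 𝕓 := t • br X (φ t) + br (curve φ t) X
def vfun (t : ℝ) : 𝕓 := br (curve φ t) (φ t)
def Af (t : ℝ) : 𝕓 := (2:ℝ)⁻¹ • ∫ s in (0:ℝ)..t, wfun br X φ s
def Bf (t : ℝ) : 𝕓 := (2:ℝ)⁻¹ • ∫ s in (0:ℝ)..t, vfun br φ s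
def q1f (t : ℝ) : 𝕓 :=
  (12:ℝ)⁻¹ • (t • br X (wfun br X φ t)) + (2:ℝ)⁻¹ • br (Af br X φ t) X
def q2f (t : ℝ) : 𝕓 :=
  (12:ℝ)⁻¹ • (br (curve φ t) (wfun br X φ t) + t • br X (vfun br φ t))
    + (2:ℝ)⁻¹ • (br (Af br X φ t) (φ t) + br (Bf br φ t) X)
def q3f (t : ℝ) : 𝕓 :=
  (12:ℝ)⁻¹ • br (curve φ t) (vfun br φ t) + (2:ℝ)⁻¹ • br (Bf br φ t) (φ t)

variable {φ}

lemma curveφ_continuousOn (hφ : IntegrableOn φ (Icc (0:ℝ) 1)) :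
    ContinuousOn (curve φ) (Icc (0:ℝ) 1) := by
  have := intervalIntegral.continuousOn_primitive_interval
    (a := (0:ℝ)) (b := (1:ℝ)) (μ := volume) (f := φ) (by
      simpa [Set.uIcc_of_le (by norm_num : (0:ℝ) ≤ 1)] using hφ)
  rw [Set.uIcc_of_le (by norm_num : (0:ℝ) ≤ 1)] at this
  exact this

lemma intervalIntegrable_of_integrableOn_Icc {f : ℝ → 𝕓}
    (hf : IntegrableOn f (Icc (0:ℝ) 1)) {t : ℝ} (ht : t ∈ Icc (0:ℝ) 1) :
    IntervalIntegrable f volume 0 t := by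
  rw [intervalIntegrable_iff]
  exact hf.mono_set (by
    rw [Set.uIoc_of_le ht.1]
    exact Set.Ioc_subset_Icc_self.trans (Set.Icc_subset_Icc le_rfl ht.2))

lemma integrableOn_wfun (hφ : IntegrableOn φ (Icc (0:ℝ) 1)) :
    IntegrableOn (wfun br X φ) (Icc (0:ℝ) 1) := by
  have h1 : IntegrableOn (fun t => br (t • X) (φ t)) (Icc (0:ℝ) 1) :=
    integrableOn_br_right br (by fun_prop) hφ
  have h2 : IntegrableOn (fun t => br (curve φ t) X) (Icc (0:ℝ) 1) :=
    (continuousOn_br br (curveφ_continuousOn hφ) continuousOn_const).integrableOn_Icc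
  have := h1.add h2
  refine IntegrableOn.congr_fun this (fun t _ => ?_) measurableSet_Icc
  simp [wfun, _root_.map_smul]

lemma integrableOn_vfun (hφ : IntegrableOn φ (Icc (0:ℝ) 1)) :
    IntegrableOn (vfun br φ) (Icc (0:ℝ) 1) :=
  integrableOn_br_right br (curveφ_continuousOn hφ) hφ

lemma continuousOn_Af (hφ : IntegrableOn φ (Icc (0:ℝ) 1)) :
    ContinuousOn (Af br X φ) (Icc (0:ℝ) 1) := by
  have := intervalIntegral.continuousOn_primitive_interval
    (a := (0:ℝ)) (b := (1:ℝ)) (μ := volume) (f := wfun br X φ) (by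
      simpa [Set.uIcc_of_le (by norm_num : (0:ℝ) ≤ 1)] using integrableOn_wfun br X hφ)
  have h2 := this.const_smul (2:ℝ)⁻¹
  rw [Set.uIcc_of_le (by norm_num : (0:ℝ) ≤ 1)] at h2
  exact h2

lemma continuousOn_Bf (hφ : IntegrableOn φ (Icc (0:ℝ) 1)) :
    ContinuousOn (Bf br φ) (Icc (0:ℝ) 1) := by
  have := intervalIntegral.continuousOn_primitive_interval
    (a := (0:ℝ)) (b := (1:ℝ)) (μ := volume) (f := vfun br φ) (by
      simpa [Set.uIcc_of_le (by norm_num : (0:ℝ) ≤ 1)] using integrableOn_vfun br hφ)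
  have h2 := this.const_smul (2:ℝ)⁻¹
  rw [Set.uIcc_of_le (by norm_num : (0:ℝ) ≤ 1)] at h2
  exact h2

lemma integrableOn_q1f (hφ : IntegrableOn φ (Icc (0:ℝ) 1)) :
    IntegrableOn (q1f br X φ) (Icc (0:ℝ) 1) := by
  have h1 : IntegrableOn (fun t => br (t • X) (wfun br X φ t)) (Icc (0:ℝ) 1) :=
    integrableOn_br_right br (by fun_prop) (integrableOn_wfun br X hφ)
  have h2 : IntegrableOn (fun t => br (Af br X φ t) X) (Icc (0:ℝ) 1) :=
    (continuousOn_br br (continuousOn_Af br X hφ) continuousOn_const).integrableOn_Icc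
  have := (h1.smul (12:ℝ)⁻¹).add (h2.smul (2:ℝ)⁻¹)
  refine IntegrableOn.congr_fun this (fun t _ => ?_) measurableSet_Icc
  simp [q1f, _root_.map_smul]

lemma integrableOn_q2f (hφ : IntegrableOn φ (Icc (0:ℝ) 1)) :
    IntegrableOn (q2f br X φ) (Icc (0:ℝ) 1) := by
  have h1 : IntegrableOn (fun t => br (curve φ t) (wfun br X φ t)) (Icc (0:ℝ) 1) :=
    integrableOn_br_right br (curveφ_continuousOn hφ) (integrableOn_wfun br X hφ)
  have h2 : IntegrableOn (fun t => br (t • X) (vfun br φ t)) (Icc (0:ℝ) 1) :=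
    integrableOn_br_right br (by fun_prop) (integrableOn_vfun br hφ)
  have h3 : IntegrableOn (fun t => br (Af br X φ t) (φ t)) (Icc (0:ℝ) 1) :=
    integrableOn_br_right br (continuousOn_Af br X hφ) hφ
  have h4 : IntegrableOn (fun t => br (Bf br φ t) X) (Icc (0:ℝ) 1) :=
    (continuousOn_br br (continuousOn_Bf br hφ) continuousOn_const).integrableOn_Icc
  have := ((h1.add h2).smul (12:ℝ)⁻¹).add ((h3.add h4).smul (2:ℝ)⁻¹)
  refine IntegrableOn.congr_fun this (fun t _ => ?_) measurableSet_Icc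
  simp [q2f, _root_.map_smul]

lemma integrableOn_q3f (hφ : IntegrableOn φ (Icc (0:ℝ) 1)) :
    IntegrableOn (q3f br φ) (Icc (0:ℝ) 1) := by
  have h1 : IntegrableOn (fun t => br (curve φ t) (vfun br φ t)) (Icc (0:ℝ) 1) :=
    integrableOn_br_right br (curveφ_continuousOn hφ) (integrableOn_vfun br hφ)
  have h2 : IntegrableOn (fun t => br (Bf br φ t) (φ t)) (Icc (0:ℝ) 1) :=
    integrableOn_br_right br (continuousOn_Bf br hφ) hφ
  have := (h1.smul (12:ℝ)⁻¹).add (h2.smul (2:ℝ)⁻¹)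
  refine IntegrableOn.congr_fun this (fun t _ => ?_) measurableSet_Icc
  simp [q3f, _root_.map_smul]

end Expansion

section Expansion2

variable (X : 𝕓) {φ : ℝ → 𝕓}

lemma curve_line_add (hφ : IntegrableOn φ (Icc (0:ℝ) 1)) (ε : ℝ) {t : ℝ}
    (ht : t ∈ Icc (0:ℝ) 1) :
    curve ((fun _ : ℝ => X) + ε • φ) t = t • X + ε • curve φ t := by
  have hint := intervalIntegrable_of_integrableOn_Icc hφ ht
  calc curve ((fun _ : ℝ => X) + ε • φ) t
      = ∫ s in (0:ℝ)..t, (X + ε • φ s) := rfl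
    _ = (∫ _s in (0:ℝ)..t, X) + ∫ s in (0:ℝ)..t, ε • φ s :=
        intervalIntegral.integral_add intervalIntegrable_const (hint.smul ε)
    _ = t • X + ε • curve φ t := by
        rw [intervalIntegral.integral_const, intervalIntegral.integral_smul]
        simp [curve]

lemma curve2_line_add (hφ : IntegrableOn φ (Icc (0:ℝ) 1)) (hXX : br X X = 0) (ε : ℝ)
    {t : ℝ} (ht : t ∈ Icc (0:ℝ) 1) :
    curve2 br ((fun _ : ℝ => X) + ε • φ) t = ε • Af br X φ t + ε ^ 2 • Bf br φ t := by
  have hw := intervalIntegrable_of_integrableOn_Icc (integrableOn_wfun br X hφ) ht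
  have hv := intervalIntegrable_of_integrableOn_Icc (integrableOn_vfun br hφ) ht
  have hEq : EqOn (fun s => br (curve ((fun _ : ℝ => X) + ε • φ) s)
        (((fun _ : ℝ => X) + ε • φ) s))
      (fun s => ε • wfun br X φ s + ε ^ 2 • vfun br φ s) (uIcc (0:ℝ) t) := by
    intro s hs
    rw [uIcc_of_le ht.1] at hs
    have hs' : s ∈ Icc (0:ℝ) 1 := ⟨hs.1, hs.2.trans ht.2⟩
    have hc := curve_line_add X hφ ε hs'
    show br (curve ((fun _ : ℝ => X) + ε • φ) s) (X + ε • φ s)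
        = ε • wfun br X φ s + ε ^ 2 • vfun br φ s
    rw [hc]
    simp only [wfun, vfun, map_add, _root_.map_smul, LinearMap.add_apply,
      LinearMap.smul_apply, hXX, smul_zero, zero_add, add_zero, smul_add]
    module
  have hw' : IntervalIntegrable (fun s => ε • wfun br X φ s) volume 0 t := hw.smul ε
  have hv' : IntervalIntegrable (fun s => ε ^ 2 • vfun br φ s) volume 0 t := hv.smul (ε ^ 2)
  show (2:ℝ)⁻¹ • ∫ s in (0:ℝ)..t, br (curve ((fun _ : ℝ => X) + ε • φ) s)
      (((fun _ : ℝ => X) + ε • φ) s) = _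
  rw [intervalIntegral.integral_congr hEq,
    intervalIntegral.integral_add hw' hv',
    intervalIntegral.integral_smul, intervalIntegral.integral_smul]
  unfold Af Bf
  module

lemma F3_line_add (hφ : IntegrableOn φ (Icc (0:ℝ) 1)) (hXX : br X X = 0) (ε : ℝ) :
    F3 br ((fun _ : ℝ => X) + ε • φ)
      = ε • (∫ t in (0:ℝ)..1, q1f br X φ t) + ε ^ 2 • (∫ t in (0:ℝ)..1, q2f br X φ t)
        + ε ^ 3 • (∫ t in (0:ℝ)..1, q3f br φ t) := by
  have h1 : (1:ℝ) ∈ Icc (0:ℝ) 1 := by norm_num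
  have hq1 := intervalIntegrable_of_integrableOn_Icc (integrableOn_q1f br X hφ) h1
  have hq2 := intervalIntegrable_of_integrableOn_Icc (integrableOn_q2f br X hφ) h1
  have hq3 := intervalIntegrable_of_integrableOn_Icc (integrableOn_q3f br hφ) h1
  have hEq : EqOn (fun t =>
      ((2:ℝ)⁻¹ • (br (curve ((fun _ : ℝ => X) + ε • φ) t)
          ((2:ℝ)⁻¹ • br (curve ((fun _ : ℝ => X) + ε • φ) t) (((fun _ : ℝ => X) + ε • φ) t))
        + br (curve2 br ((fun _ : ℝ => X) + ε • φ) t) (((fun _ : ℝ => X) + ε • φ) t))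
      - (6:ℝ)⁻¹ • br (curve ((fun _ : ℝ => X) + ε • φ) t)
          (br (curve ((fun _ : ℝ => X) + ε • φ) t) (((fun _ : ℝ => X) + ε • φ) t))))
      (fun t => ε • q1f br X φ t + ε ^ 2 • q2f br X φ t + ε ^ 3 • q3f br φ t)
      (uIcc (0:ℝ) 1) := by
    intro t ht
    rw [uIcc_of_le (by norm_num : (0:ℝ) ≤ 1)] at ht
    have hc := curve_line_add X hφ ε ht
    have hc2 := curve2_line_add br X hφ hXX ε ht
    show ((2:ℝ)⁻¹ • (br (curve ((fun _ : ℝ => X) + ε • φ) t)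
          ((2:ℝ)⁻¹ • br (curve ((fun _ : ℝ => X) + ε • φ) t) (X + ε • φ t))
        + br (curve2 br ((fun _ : ℝ => X) + ε • φ) t) (X + ε • φ t))
      - (6:ℝ)⁻¹ • br (curve ((fun _ : ℝ => X) + ε • φ) t)
          (br (curve ((fun _ : ℝ => X) + ε • φ) t) (X + ε • φ t))) = _
    rw [hc, hc2]
    simp only [q1f, q2f, q3f, wfun, vfun, map_add, _root_.map_smul, LinearMap.add_apply,
      LinearMap.smul_apply, hXX, smul_zero, zero_add, add_zero, smul_add, map_zero,
      LinearMap.zero_apply]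
    module
  have hq1' : IntervalIntegrable (fun t => ε • q1f br X φ t) volume 0 1 := hq1.smul ε
  have hq2' : IntervalIntegrable (fun t => ε ^ 2 • q2f br X φ t) volume 0 1 := hq2.smul (ε ^ 2)
  have hq3' : IntervalIntegrable (fun t => ε ^ 3 • q3f br φ t) volume 0 1 := hq3.smul (ε ^ 3)
  show (∫ t in (0:ℝ)..1, _) = _
  rw [intervalIntegral.integral_congr hEq,
    intervalIntegral.integral_add (hq1'.add hq2') hq3',
    intervalIntegral.integral_add hq1' hq2',
    intervalIntegral.integral_smul, intervalIntegral.integral_smul,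
    intervalIntegral.integral_smul]

lemma dF3_line (hφ : IntegrableOn φ (Icc (0:ℝ) 1)) (hXX : br X X = 0) :
    dF3 br (fun _ : ℝ => X) φ = ∫ t in (0:ℝ)..1, q1f br X φ t := by
  unfold dF3
  have hfe : (fun ε : ℝ => F3 br ((fun _ : ℝ => X) + ε • φ))
      = fun ε : ℝ => ε • (∫ t in (0:ℝ)..1, q1f br X φ t)
        + ε ^ 2 • (∫ t in (0:ℝ)..1, q2f br X φ t)
        + ε ^ 3 • (∫ t in (0:ℝ)..1, q3f br φ t) :=
    funext fun ε => F3_line_add br X hφ hXX ε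
  rw [hfe]
  have h1 : HasDerivAt (fun ε : ℝ => ε • (∫ t in (0:ℝ)..1, q1f br X φ t))
      (∫ t in (0:ℝ)..1, q1f br X φ t) 0 := by
    simpa using (hasDerivAt_id (0:ℝ)).smul_const (∫ t in (0:ℝ)..1, q1f br X φ t)
  have h2 : HasDerivAt (fun ε : ℝ => ε ^ 2 • (∫ t in (0:ℝ)..1, q2f br X φ t)) (0:𝕓) 0 := by
    simpa using (hasDerivAt_pow 2 (0:ℝ)).smul_const (∫ t in (0:ℝ)..1, q2f br X φ t)
  have h3 : HasDerivAt (fun ε : ℝ => ε ^ 3 • (∫ t in (0:ℝ)..1, q3f br φ t)) (0:𝕓) 0 := by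
    simpa using (hasDerivAt_pow 3 (0:ℝ)).smul_const (∫ t in (0:ℝ)..1, q3f br φ t)
  have := ((h1.add h2).add h3).deriv
  simp only [add_zero] at this
  exact this

lemma dE_line (hφ : IntegrableOn φ (Icc (0:ℝ) 1)) (hXX : br X X = 0) :
    dE br (fun _ : ℝ => X) φ
      = (curve φ 1, Af br X φ 1, ∫ t in (0:ℝ)..1, q1f br X φ t) := by
  unfold dE
  have h1mem : (1:ℝ) ∈ Icc (0:ℝ) 1 := by norm_num
  have hfe : (fun ε : ℝ => Emap br ((fun _ : ℝ => X) + ε • φ))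
      = fun ε : ℝ => (X + ε • curve φ 1,
          ε • Af br X φ 1 + ε ^ 2 • Bf br φ 1,
          ε • (∫ t in (0:ℝ)..1, q1f br X φ t) + ε ^ 2 • (∫ t in (0:ℝ)..1, q2f br X φ t)
            + ε ^ 3 • (∫ t in (0:ℝ)..1, q3f br φ t)) := by
    funext ε
    have hc := curve_line_add X hφ ε h1mem
    have hc2 := curve2_line_add br X hφ hXX ε h1mem
    have hF3 := F3_line_add br X hφ hXX ε
    simp only [Emap, F1, F2, hc, hc2, hF3, one_smul]
  rw [hfe]
  have hA : HasDerivAt (fun ε : ℝ => X + ε • curve φ 1) (curve φ 1) 0 := by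
    simpa using ((hasDerivAt_id (0:ℝ)).smul_const (curve φ 1)).const_add X
  have hB : HasDerivAt (fun ε : ℝ => ε • Af br X φ 1 + ε ^ 2 • Bf br φ 1) (Af br X φ 1) 0 := by
    have b1 : HasDerivAt (fun ε : ℝ => ε • Af br X φ 1) (Af br X φ 1) 0 := by
      simpa using (hasDerivAt_id (0:ℝ)).smul_const (Af br X φ 1)
    have b2 : HasDerivAt (fun ε : ℝ => ε ^ 2 • Bf br φ 1) (0:𝕓) 0 := by
      simpa using (hasDerivAt_pow 2 (0:ℝ)).smul_const (Bf br φ 1)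
    have := b1.add b2
    simp only [add_zero] at this
    exact this
  have hC : HasDerivAt (fun ε : ℝ => ε • (∫ t in (0:ℝ)..1, q1f br X φ t)
      + ε ^ 2 • (∫ t in (0:ℝ)..1, q2f br X φ t)
      + ε ^ 3 • (∫ t in (0:ℝ)..1, q3f br φ t)) (∫ t in (0:ℝ)..1, q1f br X φ t) 0 := by
    have c1 : HasDerivAt (fun ε : ℝ => ε • (∫ t in (0:ℝ)..1, q1f br X φ t))
        (∫ t in (0:ℝ)..1, q1f br X φ t) 0 := by
      simpa using (hasDerivAt_id (0:ℝ)).smul_const (∫ t in (0:ℝ)..1, q1f br X φ t)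
    have c2 : HasDerivAt (fun ε : ℝ => ε ^ 2 • (∫ t in (0:ℝ)..1, q2f br X φ t)) (0:𝕓) 0 := by
      simpa using (hasDerivAt_pow 2 (0:ℝ)).smul_const (∫ t in (0:ℝ)..1, q2f br X φ t)
    have c3 : HasDerivAt (fun ε : ℝ => ε ^ 3 • (∫ t in (0:ℝ)..1, q3f br φ t)) (0:𝕓) 0 := by
      simpa using (hasDerivAt_pow 3 (0:ℝ)).smul_const (∫ t in (0:ℝ)..1, q3f br φ t)
    have := (c1.add c2).add c3
    simp only [add_zero] at this
    exact this
  exact (hA.prodMk (hB.prodMk hC)).deriv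

end Expansion2

set_option maxHeartbeats 1000000 in
/-- in the free Carnot algebra of rank 2 and step 3, for the line
`γ(t) = t(c¹e₁ + c²e₂)` (derivative `≡ c¹e₁ + c²e₂`), `d_γF³` takes values in
`span{c¹e₄ + c²e₅}`, and `γ` is singular. -/
theorem statement17
    (e1 e2 e3 e4 e5 : 𝕓)
    (hli : LinearIndependent ℝ ![e1, e2, e3, e4, e5])
    (hspanb : Submodule.span ℝ {e1, e2, e3, e4, e5} = ⊤)
    (halt : ∀ x, br x x = 0)
    (hjac : ∀ x y z, br x (br y z) + br y (br z x) + br z (br x y) = 0)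
    (h12 : br e1 e2 = e3) (h13 : br e1 e3 = e4) (h23 : br e2 e3 = e5)
    (h14 : br e1 e4 = 0) (h15 : br e1 e5 = 0) (h24 : br e2 e4 = 0) (h25 : br e2 e5 = 0)
    (h34 : br e3 e4 = 0) (h35 : br e3 e5 = 0) (h45 : br e4 e5 = 0)
    (hon1 : (inner ℝ e1 e1 : ℝ) = 1) (hon2 : (inner ℝ e2 e2 : ℝ) = 1)
    (hon12 : (inner ℝ e1 e2 : ℝ) = 0)
    (V1 V2 V3 : Submodule ℝ 𝕓)
    (hV1 : V1 = Submodule.span ℝ {e1, e2})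
    (hV2 : V2 = Submodule.span ℝ {e3})
    (hV3 : V3 = Submodule.span ℝ {e4, e5})
    (c1 c2 : ℝ) (hc : c1 ≠ 0 ∨ c2 ≠ 0) :
    (∀ φ ∈ H1zero V1, dF3 br (fun _ : ℝ => c1 • e1 + c2 • e2) φ ∈
      Submodule.span ℝ {c1 • e4 + c2 • e5}) ∧
    IsSingular br V1 V2 V3 (fun _ : ℝ => c1 • e1 + c2 • e2) := by
  haveI : IsFiniteMeasure (volume.restrict (Icc (0:ℝ) 1)) :=
    ⟨by rw [Measure.restrict_apply_univ]; simp [Real.volume_Icc]⟩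
  set X : 𝕓 := c1 • e1 + c2 • e2 with hXdef
  set Z : 𝕓 := c1 • e4 + c2 • e5 with hZdef
  have hanti : ∀ x y, br y x = - br x y := by
    intro x y
    have h := halt (x + y)
    simp only [map_add, LinearMap.add_apply, halt, zero_add, add_zero] at h
    exact eq_neg_of_add_eq_zero_left h
  have h21 : br e2 e1 = -e3 := by rw [hanti e1 e2, h12]
  have hXX : br X X = 0 := halt X
  have hXmem : X ∈ V1 := by
    rw [hV1]
    exact add_mem (Submodule.smul_mem _ _ (Submodule.subset_span (by simp)))
      (Submodule.smul_mem _ _ (Submodule.subset_span (by simp)))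
  have hZmem : Z ∈ V3 := by
    rw [hV3]
    exact add_mem (Submodule.smul_mem _ _ (Submodule.subset_span (by simp)))
      (Submodule.smul_mem _ _ (Submodule.subset_span (by simp)))
  have hbrV1 : ∀ u ∈ V1, ∀ w ∈ V1, br u w ∈ V2 := by
    intro u hu w hw
    rw [hV1] at hu hw
    rw [hV2]
    obtain ⟨a, b, rfl⟩ := Submodule.mem_span_pair.1 hu
    obtain ⟨c, d, rfl⟩ := Submodule.mem_span_pair.1 hw
    have key : br (a • e1 + b • e2) (c • e1 + d • e2) = (a * d - b * c) • e3 := by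
      simp only [map_add, _root_.map_smul, LinearMap.add_apply, LinearMap.smul_apply,
        halt, h12, h21, smul_zero, zero_add, add_zero, smul_neg]
      module
    rw [key]
    exact Submodule.smul_mem _ _ (Submodule.mem_span_singleton_self e3)
  have hbrXV2 : ∀ p ∈ V2, br X p ∈ Submodule.span ℝ {Z} := by
    intro p hp
    rw [hV2] at hp
    obtain ⟨r, rfl⟩ := Submodule.mem_span_singleton.1 hp
    have key : br X (r • e3) = r • Z := by
      rw [hXdef, hZdef]
      simp only [map_add, _root_.map_smul, LinearMap.add_apply, LinearMap.smul_apply,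
        h13, h23]
      try module
    rw [key]
    exact Submodule.smul_mem _ _ (Submodule.mem_span_singleton_self Z)
  have hbrV2X : ∀ p ∈ V2, br p X ∈ Submodule.span ℝ {Z} := by
    intro p hp
    rw [hanti]
    exact neg_mem (hbrXV2 p hp)
  have main : ∀ φ ∈ H1zero V1,
      dE br (fun _ : ℝ => X) φ = (curve φ 1, Af br X φ 1, ∫ t in (0:ℝ)..1, q1f br X φ t)
      ∧ curve φ 1 ∈ V1 ∧ Af br X φ 1 ∈ V2
      ∧ (∫ t in (0:ℝ)..1, q1f br X φ t) ∈ Submodule.span ℝ {Z}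
      ∧ dF3 br (fun _ : ℝ => X) φ ∈ Submodule.span ℝ {Z} := by
    intro φ hφ
    have hmemV1 : ∀ t, φ t ∈ V1 := hφ.1
    have hint : IntegrableOn φ (Icc (0:ℝ) 1) := hφ.2.integrable (by norm_num)
    have hΦ : ∀ t, curve φ t ∈ V1 := fun t => integral_mem_submodule V1 hmemV1
    have hwmem : ∀ t, wfun br X φ t ∈ V2 := fun t =>
      add_mem (Submodule.smul_mem _ _ (hbrV1 X hXmem (φ t) (hmemV1 t)))
        (hbrV1 (curve φ t) (hΦ t) X hXmem)
    have hA : ∀ t, Af br X φ t ∈ V2 := fun t =>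
      Submodule.smul_mem _ _ (integral_mem_submodule V2 hwmem)
    have hq1mem : ∀ t, q1f br X φ t ∈ Submodule.span ℝ {Z} := fun t =>
      add_mem (Submodule.smul_mem _ _ (Submodule.smul_mem _ _ (hbrXV2 _ (hwmem t))))
        (Submodule.smul_mem _ _ (hbrV2X _ (hA t)))
    have hQ1 : (∫ t in (0:ℝ)..1, q1f br X φ t) ∈ Submodule.span ℝ {Z} :=
      integral_mem_submodule _ hq1mem
    refine ⟨dE_line br X hint hXX, hΦ 1, hA 1, hQ1, ?_⟩
    rw [dF3_line br X hint hXX]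
    exact hQ1
  constructor
  · intro φ hφ
    exact (main φ hφ).2.2.2.2
  · rw [IsSingular]
    have hSle : Submodule.span ℝ {Z} ≤ V3 := by
      rw [Submodule.span_le, Set.singleton_subset_iff]
      exact hZmem
    have hle : Submodule.span ℝ {x : 𝕓 × 𝕓 × 𝕓 | ∃ φ ∈ H1zero V1,
        dE br (fun _ : ℝ => X) φ = x}
        ≤ V1.prod (V2.prod (Submodule.span ℝ {Z})) := by
      rw [Submodule.span_le]
      rintro x ⟨φ, hφ, rfl⟩
      obtain ⟨hdE, hm1, hm2, hm3, -⟩ := main φ hφ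
      rw [hdE]
      exact Submodule.mem_prod.2 ⟨hm1, Submodule.mem_prod.2 ⟨hm2, hm3⟩⟩
    have hlt : V1.prod (V2.prod (Submodule.span ℝ {Z})) < V1.prod (V2.prod V3) := by
      rw [SetLike.lt_iff_le_and_exists]
      refine ⟨Submodule.prod_mono le_rfl (Submodule.prod_mono le_rfl hSle),
        (0, 0, c2 • e4 + (-c1) • e5), ?_, ?_⟩
      · refine Submodule.mem_prod.2 ⟨zero_mem _, Submodule.mem_prod.2 ⟨zero_mem _, ?_⟩⟩
        rw [hV3]
        exact add_mem (Submodule.smul_mem _ _ (Submodule.subset_span (by simp)))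
          (Submodule.smul_mem _ _ (Submodule.subset_span (by simp)))
      · intro hmem
        have h3 := (Submodule.mem_prod.1 (Submodule.mem_prod.1 hmem).2).2
        obtain ⟨r, hr⟩ := Submodule.mem_span_singleton.1 h3
        have h0 : (r * c1 - c2) • e4 + (r * c2 + c1) • e5
            = r • Z - (c2 • e4 + (-c1) • e5) := by
          rw [hZdef]; module
        rw [hr, sub_self] at h0
        have hsum : ∑ i, (fun i => ![0, 0, 0, r * c1 - c2, r * c2 + c1] i) i
            • ![e1, e2, e3, e4, e5] i = 0 := by
          simpa [Fin.sum_univ_five] using h0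
        have hli' := Fintype.linearIndependent_iff.1 hli _ hsum
        have ha : r * c1 - c2 = 0 := by simpa using hli' 3
        have hb : r * c2 + c1 = 0 := by simpa using hli' 4
        have hcc : c1 ^ 2 + c2 ^ 2 = 0 := by linear_combination c1 * hb - c2 * ha
        have hc1 : c1 = 0 := by
          have h1 : c1 ^ 2 = 0 := le_antisymm (by nlinarith [sq_nonneg c2]) (sq_nonneg c1)
          exact pow_eq_zero_iff (by norm_num) |>.1 h1
        have hc2 : c2 = 0 := by
          have h1 : c2 ^ 2 = 0 := le_antisymm (by nlinarith [sq_nonneg c1]) (sq_nonneg c2)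
          exact pow_eq_zero_iff (by norm_num) |>.1 h1
        rcases hc with h | h
        · exact h hc1
        · exact h hc2
    exact lt_of_le_of_lt hle hlt
end
end
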